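/- arXiv:1812.06356 — 3 statements merged into one kernel-verified Lean document; each statement's English description precedes it below -/
import Mathlib

section
/- There exists a MAPF instance that admits a solution, but such that for every priority ordering ≺ on its agents there is no solution consistent with ≺; in other words, there exist solvable MAPF instances that are not P-solvable, so prioritized planning with an arbitrary priority ordering is incomplete for MAPF in general. -/
/-- Two (space-time) paths have a vertex collision: same vertex at the same time. -/
def VCol {V : Type} (π σ : ℕ → V) : Prop := ∃ t, π t = σ t

/-- Two (space-time) paths have an edge collision: they traverse the same edge in
opposite directions at the same time. -/
def ECol {V : Type} (π σ : ℕ → V) : Prop := ∃ t, π t = σ (t + 1) ∧ π (t + 1) = σ t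

/-- Two paths collide if they have a vertex collision or an edge collision. -/
def Collide {V : Type} (π σ : ℕ → V) : Prop := VCol π σ ∨ ECol π σ

/-- `π : ℕ → V` is a path from `s` to `t` in `G`: it starts at `s`, at each time step
it stays put or moves along an edge of `G`, and it is eventually always at `t`. -/
def IsPathFun {V : Type} (G : SimpleGraph V) (s t : V) (π : ℕ → V) : Prop :=
  π 0 = s ∧ (∀ n, π (n + 1) = π n ∨ G.Adj (π n) (π (n + 1))) ∧ ∃ T, ∀ n ≥ T, π n = t

/-- The arrival time of a path at a target vertex `tgt`: the least time `T` such that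
the path is at `tgt` at all times `≥ T`. -/
noncomputable def arrivalTime {V : Type} (tgt : V) (π : ℕ → V) : ℕ :=
  sInf {T | ∀ n ≥ T, π n = tgt}

/-- A MAPF instance: a connected undirected graph and `M` agents with pairwise distinct
start vertices and pairwise distinct target vertices. -/
structure MAPF where
  V : Type
  G : SimpleGraph V
  conn : G.Connected
  M : ℕ
  s : Fin M → V
  t : Fin M → V
  s_inj : Function.Injective s
  t_inj : Function.Injective t

/-- `π` is a path for agent `i` of the MAPF instance `P`. -/
def MAPF.IsPath (P : MAPF) (i : Fin P.M) (π : ℕ → P.V) : Prop :=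
  IsPathFun P.G (P.s i) (P.t i) π

/-- The arrival time of agent `i`'s path `π`. -/
noncomputable def MAPF.arr (P : MAPF) (i : Fin P.M) (π : ℕ → P.V) : ℕ :=
  arrivalTime (P.t i) π

/-- A solution: a path for each agent such that no two paths collide. -/
def MAPF.Solution (P : MAPF) (π : Fin P.M → ℕ → P.V) : Prop :=
  (∀ i, P.IsPath i (π i)) ∧ ∀ i j, i ≠ j → ¬ Collide (π i) (π j)

/-- A priority ordering: a strict partial order (irreflexive and transitive relation)
on the agents. -/
def IsPO {M : ℕ} (r : Fin M → Fin M → Prop) : Prop :=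
  (∀ i, ¬ r i i) ∧ ∀ i j k, r i j → r j k → r i k

/-- A total priority ordering: a strict total order on the agents. -/
def IsTotalPO {M : ℕ} (r : Fin M → Fin M → Prop) : Prop :=
  IsPO r ∧ ∀ i j : Fin M, i ≠ j → r i j ∨ r j i

/-- A plan `π` is consistent with a priority ordering `r`: for every agent `i`, the
arrival time of `π i` is the minimum arrival time over all paths for agent `i` that
have no collision with `π j` for every higher-priority agent `j` (`r j i`). -/
def MAPF.Consistent (P : MAPF) (π : Fin P.M → ℕ → P.V)
    (r : Fin P.M → Fin P.M → Prop) : Prop :=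
  ∀ i, IsLeast {T | ∃ σ, P.IsPath i σ ∧ (∀ j, r j i → ¬ Collide σ (π j)) ∧ P.arr i σ = T}
    (P.arr i (π i))

/-- A MAPF instance is P-solvable if it admits a solution consistent with some
priority ordering. -/
def MAPF.PSolvable (P : MAPF) : Prop :=
  ∃ π r, IsPO r ∧ P.Solution π ∧ P.Consistent π r

/-- The flowtime of a plan: the sum of the arrival times of all agents. -/
noncomputable def MAPF.flowtime (P : MAPF) (π : Fin P.M → ℕ → P.V) : ℕ :=
  ∑ i, P.arr i (π i)

/-- The makespan of a plan: the maximum of the arrival times of all agents. -/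
noncomputable def MAPF.makespan (P : MAPF) (π : Fin P.M → ℕ → P.V) : ℕ :=
  Finset.univ.sup fun i => P.arr i (π i)

/-- A MAPF instance is well-formed if every agent has a (finite) walk from its start
vertex to its target vertex that visits neither the start vertex nor the target vertex
of any other agent. -/
def MAPF.WellFormed (P : MAPF) : Prop :=
  ∀ i, ∃ w : P.G.Walk (P.s i) (P.t i),
    ∀ j, j ≠ i → P.s j ∉ w.support ∧ P.t j ∉ w.support

/-! ### Counterexample construction -/

/-- Star graph on `Fin 4` with center `1`. -/
def star4 : SimpleGraph (Fin 4) where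
  Adj a b := a ≠ b ∧ (a = 1 ∨ b = 1)
  symm := by
    constructor
    intro a b h
    exact ⟨fun e => h.1 e.symm, h.2.symm⟩
  loopless := by
    constructor
    intro a h
    exact h.1 rfl

instance : DecidableRel star4.Adj :=
  fun a b => inferInstanceAs (Decidable (a ≠ b ∧ (a = 1 ∨ b = 1)))

lemma star4_conn : star4.Connected := by
  have hreach : ∀ v : Fin 4, star4.Reachable v 1 := by
    intro v
    by_cases h : v = 1
    · rw [h]
    · exact (show star4.Adj v 1 from ⟨h, Or.inr rfl⟩).reachable
  exact { preconnected := fun u v => (hreach u).trans (hreach v).symm, nonempty := ⟨1⟩ }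

/-- The counterexample MAPF instance: two agents on the star, agent 0 goes `0 → 1`
and agent 1 goes `1 → 0`. -/
abbrev P0 : MAPF where
  V := Fin 4
  G := star4
  conn := star4_conn
  M := 2
  s := ![0, 1]
  t := ![1, 0]
  s_inj := by decide
  t_inj := by decide

def pi0 : ℕ → Fin 4 := fun n => match n with
  | 0 => 0 | 1 => 1 | 2 => 3 | _+3 => 1

def pi1 : ℕ → Fin 4 := fun n => match n with
  | 0 => 1 | 1 => 2 | 2 => 1 | _+3 => 0

lemma collide_symm {V : Type} {π σ : ℕ → V} (h : Collide π σ) : Collide σ π := by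
  rcases h with ⟨t, ht⟩ | ⟨t, ht1, ht2⟩
  · exact Or.inl ⟨t, ht.symm⟩
  · exact Or.inr ⟨t, ht2.symm, ht1.symm⟩

lemma P0_sol : P0.Solution ![pi0, pi1] := by
  constructor
  · intro i
    fin_cases i
    · refine ⟨rfl, ?_, 3, ?_⟩
      · intro n
        rcases n with _ | _ | _ | n
        · exact Or.inr ⟨by decide, by decide⟩
        · exact Or.inr ⟨by decide, by decide⟩
        · exact Or.inr ⟨by decide, by decide⟩
        · exact Or.inl rfl
      · intro n hn
        obtain ⟨k, rfl⟩ := Nat.exists_eq_add_of_le hn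
        rw [Nat.add_comm]
        rfl
    · refine ⟨rfl, ?_, 3, ?_⟩
      · intro n
        rcases n with _ | _ | _ | n
        · exact Or.inr ⟨by decide, by decide⟩
        · exact Or.inr ⟨by decide, by decide⟩
        · exact Or.inr ⟨by decide, by decide⟩
        · exact Or.inl rfl
      · intro n hn
        obtain ⟨k, rfl⟩ := Nat.exists_eq_add_of_le hn
        rw [Nat.add_comm]
        rfl
  · have key : ¬ Collide pi0 pi1 := by
      rintro (⟨t, h⟩ | ⟨t, h1, h2⟩)
      · rcases t with _ | _ | _ | t <;> simp [pi0, pi1] at h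
      · rcases t with _ | _ | _ | t <;> simp [pi0, pi1] at h1 h2
    intro i j hij
    fin_cases i <;> fin_cases j
    · exact absurd rfl hij
    · simpa using key
    · simpa using fun h => key (collide_symm h)
    · exact absurd rfl hij

lemma arrival_eq_one {V : Type} (tgt : V) (π : ℕ → V) (h0 : π 0 ≠ tgt)
    (h1 : ∀ n ≥ 1, π n = tgt) : arrivalTime tgt π = 1 := by
  unfold arrivalTime
  have hmem : (1 : ℕ) ∈ {T | ∀ n ≥ T, π n = tgt} := h1
  refine le_antisymm (Nat.sInf_le hmem) ?_
  by_contra h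
  push_neg at h
  have h0m : sInf {T | ∀ n ≥ T, π n = tgt} = 0 := by omega
  have := Nat.sInf_mem (⟨1, hmem⟩ : Set.Nonempty {T | ∀ n ≥ T, π n = tgt})
  rw [h0m] at this
  exact h0 (this 0 le_rfl)

/-- If a path starts off-target, has some arrival, and its arrival time is ≤ 1, then it
is at the target from time 1 on. -/
lemma forced_path {V : Type} (tgt : V) (π : ℕ → V) (h0 : π 0 ≠ tgt)
    (hT : ∃ T, ∀ n ≥ T, π n = tgt) (hle : arrivalTime tgt π ≤ 1) :
    ∀ n ≥ 1, π n = tgt := by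
  have hne : Set.Nonempty {T | ∀ n ≥ T, π n = tgt} := hT
  have hmem := Nat.sInf_mem hne
  have hpos : arrivalTime tgt π ≠ 0 := by
    intro h
    unfold arrivalTime at h
    rw [h] at hmem
    exact h0 (hmem 0 le_rfl)
  have h1 : arrivalTime tgt π = 1 := by
    unfold arrivalTime at *; omega
  unfold arrivalTime at h1
  rw [h1] at hmem
  exact hmem

/-- Blocking lemma: any valid path for agent 1 (from `1`, eventually at `0`) collides
with the parked optimal path of agent 0 (at `0` at time 0, at `1` forever after). -/
lemma block01 {π σ : ℕ → Fin 4} (hπ0 : π 0 = 0) (hπ1 : ∀ n ≥ 1, π n = 1)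
    (hσ0 : σ 0 = 1) (hstep : ∀ n, σ (n+1) = σ n ∨ star4.Adj (σ n) (σ (n+1)))
    (hex : ∃ n, σ n = 0) : Collide σ π := by
  classical
  let m := Nat.find hex
  have hm : σ m = 0 := Nat.find_spec hex
  have hlt : ∀ k < m, σ k ≠ 0 := fun k hk => Nat.find_min hex hk
  have hm0 : m ≠ 0 := by
    intro h
    rw [h, hσ0] at hm
    exact absurd hm (by decide)
  obtain ⟨k, hk⟩ : ∃ k, m = k + 1 := ⟨m - 1, by omega⟩
  have hσk : σ k = 1 := by
    rcases hstep k with h | h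
    · exfalso
      apply hlt k (by omega)
      rw [← h, ← hk]; exact hm
    · rw [← hk, hm] at h
      rcases h.2 with h1 | h1
      · exact h1
      · exact absurd h1 (by decide)
  rcases Nat.eq_zero_or_pos k with hk0 | hkpos
  · -- edge collision at time 0
    refine Or.inr ⟨0, ?_, ?_⟩
    · rw [hσ0, hπ1 1 le_rfl]
    · rw [hπ0]
      rw [hk0] at hk
      rw [← hk]
      exact hm
  · -- vertex collision at time k
    exact Or.inl ⟨k, by rw [hσk, hπ1 k hkpos]⟩

/-- Blocking lemma the other way: any valid path for agent 0 (from `0`) collides with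
the parked optimal path of agent 1 (at `1` at time 0, at `0` forever after). -/
lemma block10 {π σ : ℕ → Fin 4} (hπ0 : π 0 = 1) (hπ1 : ∀ n ≥ 1, π n = 0)
    (hσ0 : σ 0 = 0) (hstep : ∀ n, σ (n+1) = σ n ∨ star4.Adj (σ n) (σ (n+1))) :
    Collide σ π := by
  rcases hstep 0 with h | h
  · exact Or.inl ⟨1, by rw [h, hσ0, hπ1 1 le_rfl]⟩
  · rw [hσ0] at h
    have h1 : σ 1 = 1 := by
      rcases h.2 with h1 | h1
      · exact absurd h1 (by decide)
      · exact h1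
    exact Or.inr ⟨0, by rw [hσ0, hπ1 1 le_rfl], by rw [h1, hπ0]⟩

/-- There exists a solvable MAPF instance that is not P-solvable: it admits a solution,
but for every priority ordering there is no solution consistent with it. -/
theorem stmt0 :
    ∃ P : MAPF, (∃ π, P.Solution π) ∧
      ∀ r : Fin P.M → Fin P.M → Prop, IsPO r →
        ¬ ∃ π, P.Solution π ∧ P.Consistent π r := by
  refine ⟨P0, ⟨![pi0, pi1], P0_sol⟩, ?_⟩
  rintro r hr ⟨π, hsol, hcons⟩
  -- a priority ordering on two agents
  have hirr := hr.1
  have htrans := hr.2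
  have hnotboth : ¬ (r 0 1 ∧ r 1 0) := fun ⟨h1, h2⟩ => hirr 0 (htrans 0 1 0 h1 h2)
  -- basic path facts
  have hpath0 := hsol.1 0
  have hpath1 := hsol.1 1
  have hs0 : π 0 0 = 0 := by simpa [P0, MAPF.IsPath, IsPathFun] using hpath0.1
  have hs1 : π 1 0 = 1 := by simpa [P0, MAPF.IsPath, IsPathFun] using hpath1.1
  -- forced optimal path for a top-priority agent 0
  have top0 : ¬ r 1 0 → ∀ n ≥ 1, π 0 n = 1 := by
    intro h10
    set σs : ℕ → Fin 4 := fun n => if n = 0 then 0 else 1 with hσs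
    have hσpath : P0.IsPath 0 σs := by
      refine ⟨by simp [P0, hσs], ?_, 1, ?_⟩
      · intro n
        rcases n with _ | n
        · exact Or.inr ⟨by decide, by decide⟩
        · exact Or.inl rfl
      · intro n hn
        have hn0 : n ≠ 0 := by omega
        simp [hσs, hn0]
    have harrσ : P0.arr 0 σs = 1 := by
      have : P0.t 0 = 1 := by simp [P0]
      rw [MAPF.arr, this]
      exact arrival_eq_one 1 σs (by simp [hσs])
        (fun n hn => by have hn0 : n ≠ 0 := (by omega); simp [hσs, hn0])
    have hmem1 : (1 : ℕ) ∈ {T | ∃ σ, P0.IsPath 0 σ ∧ (∀ j, r j 0 → ¬ Collide σ (π j)) ∧ P0.arr 0 σ = T} := by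
      refine ⟨σs, hσpath, ?_, harrσ⟩
      intro j hj
      exfalso
      fin_cases j
      · exact hirr 0 hj
      · exact h10 hj
    have hle := (hcons 0).2 hmem1
    have ht0 : P0.t 0 = 1 := by simp [P0]
    have h0ne : π 0 0 ≠ P0.t 0 := by rw [hs0, ht0]; decide
    have := forced_path (P0.t 0) (π 0) h0ne hpath0.2.2 (by exact hle)
    intro n hn
    rw [this n hn, ht0]
  -- forced optimal path for a top-priority agent 1
  have top1 : ¬ r 0 1 → ∀ n ≥ 1, π 1 n = 0 := by
    intro h01
    set σs : ℕ → Fin 4 := fun n => if n = 0 then 1 else 0 with hσs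
    have hσpath : P0.IsPath 1 σs := by
      refine ⟨by simp [P0, hσs], ?_, 1, ?_⟩
      · intro n
        rcases n with _ | n
        · exact Or.inr ⟨by decide, by decide⟩
        · exact Or.inl rfl
      · intro n hn
        have hn0 : n ≠ 0 := by omega
        simp [hσs, hn0]
    have harrσ : P0.arr 1 σs = 1 := by
      have : P0.t 1 = 0 := by simp [P0]
      rw [MAPF.arr, this]
      exact arrival_eq_one 0 σs (by simp [hσs])
        (fun n hn => by have hn0 : n ≠ 0 := (by omega); simp [hσs, hn0])
    have hmem1 : (1 : ℕ) ∈ {T | ∃ σ, P0.IsPath 1 σ ∧ (∀ j, r j 1 → ¬ Collide σ (π j)) ∧ P0.arr 1 σ = T} := by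
      refine ⟨σs, hσpath, ?_, harrσ⟩
      intro j hj
      exfalso
      fin_cases j
      · exact h01 hj
      · exact hirr 1 hj
    have hle := (hcons 1).2 hmem1
    have ht1 : P0.t 1 = 0 := by simp [P0]
    have h1ne : π 1 0 ≠ P0.t 1 := by rw [hs1, ht1]; decide
    have := forced_path (P0.t 1) (π 1) h1ne hpath1.2.2 (by exact hle)
    intro n hn
    rw [this n hn, ht1]
  by_cases h01 : r 0 1 <;> by_cases h10 : r 1 0
  · exact hnotboth ⟨h01, h10⟩
  · -- agent 0 has top priority; agent 1 cannot respond
    have hforced := top0 h10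
    obtain ⟨⟨σ, hσpath, havoid, -⟩, -⟩ := hcons 1
    apply havoid 0 h01
    have hσ0 : σ 0 = 1 := by simpa [P0, MAPF.IsPath, IsPathFun] using hσpath.1
    have hstep : ∀ n, σ (n+1) = σ n ∨ star4.Adj (σ n) (σ (n+1)) := hσpath.2.1
    have hex : ∃ n, σ n = 0 := by
      obtain ⟨T, hT⟩ := hσpath.2.2
      refine ⟨T, ?_⟩
      have := hT T le_rfl
      simpa [P0] using this
    exact block01 hs0 hforced hσ0 hstep hex
  · -- agent 1 has top priority; agent 0 cannot respond
    have hforced := top1 h01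
    obtain ⟨⟨σ, hσpath, havoid, -⟩, -⟩ := hcons 0
    apply havoid 1 h10
    have hσ0 : σ 0 = 0 := by simpa [P0, MAPF.IsPath, IsPathFun] using hσpath.1
    have hstep : ∀ n, σ (n+1) = σ n ∨ star4.Adj (σ n) (σ (n+1)) := hσpath.2.1
    exact block10 hs1 hforced hσ0 hstep
  · -- both agents are top priority: their unique optimal paths collide
    have hf0 := top0 h10
    have hf1 := top1 h01
    apply hsol.2 0 1 (by decide)
    exact Or.inr ⟨0, by rw [hs0, hf1 1 le_rfl], by rw [hf0 1 le_rfl, hs1]⟩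
end

section
/- There exists a P-solvable MAPF instance with two agents a_1 and a_2 that admits a solution consistent with the priority ordering {1 ≺ 2}, but admits no solution consistent with the priority ordering {2 ≺ 1} and no solution consistent with the empty priority ordering; hence prioritized planning with a fixed given priority ordering is incomplete even on the class of P-solvable MAPF instances. -/
def adj5 : Fin 5 → Fin 5 → Prop := fun a b =>
  (a = 0 ∧ b = 1) ∨ (a = 1 ∧ b = 0) ∨ (a = 1 ∧ b = 2) ∨ (a = 2 ∧ b = 1) ∨
  (a = 2 ∧ b = 3) ∨ (a = 3 ∧ b = 2) ∨ (a = 2 ∧ b = 4) ∨ (a = 4 ∧ b = 2)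

instance : DecidableRel adj5 := fun a b => by unfold adj5; infer_instance

def G5 : SimpleGraph (Fin 5) where
  Adj := adj5
  symm := by constructor; intro a b h; revert h; revert b; revert a; exact (by decide : ∀ a b, adj5 a b → adj5 b a)
  loopless := by constructor; intro a h; revert h; revert a; exact (by decide : ∀ a, ¬ adj5 a a)

lemma G5_conn : G5.Connected := by
  have h2 : ∀ v : Fin 5, G5.Reachable 2 v := by
    intro v
    have a21 : G5.Adj 2 1 := by show adj5 2 1; decide
    have a10 : G5.Adj 1 0 := by show adj5 1 0; decide
    have a23 : G5.Adj 2 3 := by show adj5 2 3; decide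
    have a24 : G5.Adj 2 4 := by show adj5 2 4; decide
    fin_cases v
    · exact a21.reachable.trans a10.reachable
    · exact a21.reachable
    · exact SimpleGraph.Reachable.refl 2
    · exact a23.reachable
    · exact a24.reachable
  constructor
  · intro u v; exact (h2 u).symm.trans (h2 v)

def p1 : ℕ → Fin 5 := fun n => match n with | 0 => 0 | 1 => 1 | 2 => 2 | _ => 3
def p2 : ℕ → Fin 5 := fun n => match n with | 0 => 2 | 1 => 4 | 2 => 4 | 3 => 2 | _ => 1

lemma p1_large : ∀ n, 3 ≤ n → p1 n = 3 := by
  intro n hn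
  obtain ⟨k, rfl⟩ : ∃ k, n = k + 3 := ⟨n - 3, by omega⟩
  rfl

lemma p2_large : ∀ n, 4 ≤ n → p2 n = 1 := by
  intro n hn
  obtain ⟨k, rfl⟩ : ∃ k, n = k + 4 := ⟨n - 4, by omega⟩
  rfl

lemma arr_mem {tgt : Fin 5} {π : ℕ → Fin 5} (h : ∃ T, ∀ n ≥ T, π n = tgt) :
    ∀ n ≥ arrivalTime tgt π, π n = tgt :=
  Nat.sInf_mem (s := {T | ∀ n ≥ T, π n = tgt}) h

lemma arr_le {tgt : Fin 5} {π : ℕ → Fin 5} {T : ℕ} (h : ∀ n ≥ T, π n = tgt) :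
    arrivalTime tgt π ≤ T := Nat.sInf_le h

lemma fin5_cases (x : Fin 5) : x = 0 ∨ x = 1 ∨ x = 2 ∨ x = 3 ∨ x = 4 := by omega

-- any agent-1 path (0 → 3) has arrival time ≥ 3
lemma arr1_ge (σ : ℕ → Fin 5) (h : IsPathFun G5 0 3 σ) : 3 ≤ arrivalTime 3 σ := by
  obtain ⟨h0, hstep, hev⟩ := h
  by_contra hlt
  push_neg at hlt
  have hm := arr_mem hev
  have h2 : σ 2 = 3 := hm 2 (by omega)
  have s0 : σ 1 = σ 0 ∨ adj5 (σ 0) (σ 1) := hstep 0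
  have s1 : σ 2 = σ 1 ∨ adj5 (σ 1) (σ 2) := hstep 1
  rw [h0] at s0
  rw [h2] at s1
  rcases fin5_cases (σ 1) with e | e | e | e | e <;> rw [e] at s0 s1 <;> revert s0 s1 <;> decide

-- any agent-1 path with arrival time 3 satisfies σ 1 = 1 and σ 2 = 2
lemma arr1_eq3 (σ : ℕ → Fin 5) (h : IsPathFun G5 0 3 σ) (ha : arrivalTime 3 σ = 3) :
    σ 1 = 1 ∧ σ 2 = 2 := by
  obtain ⟨h0, hstep, hev⟩ := h
  have hm := arr_mem hev
  rw [ha] at hm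
  have h3 : σ 3 = 3 := hm 3 le_rfl
  have s0 : σ 1 = σ 0 ∨ adj5 (σ 0) (σ 1) := hstep 0
  have s1 : σ 2 = σ 1 ∨ adj5 (σ 1) (σ 2) := hstep 1
  have s2 : σ 3 = σ 2 ∨ adj5 (σ 2) (σ 3) := hstep 2
  rw [h0] at s0
  rw [h3] at s2
  rcases fin5_cases (σ 1) with e1 | e1 | e1 | e1 | e1 <;>
    rcases fin5_cases (σ 2) with e2 | e2 | e2 | e2 | e2 <;>
      rw [e1] at s0 s1 <;> rw [e2] at s1 s2 <;> simp [e1, e2] <;>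
        revert s0 s1 s2 <;> decide

-- any agent-2 path (2 → 1) has arrival time ≥ 1
lemma arr2_ge (σ : ℕ → Fin 5) (h : IsPathFun G5 2 1 σ) : 1 ≤ arrivalTime 1 σ := by
  obtain ⟨h0, hstep, hev⟩ := h
  by_contra hlt
  push_neg at hlt
  have hm := arr_mem hev
  have := hm 0 (by omega)
  rw [h0] at this
  exact absurd this (by decide)

-- any agent-1 path visits vertex 1 at some time ≥ 1
lemma hits1 (σ : ℕ → Fin 5) (h : IsPathFun G5 0 3 σ) : ∃ t ≥ 1, σ t = 1 := by
  obtain ⟨h0, hstep, T, hev⟩ := h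
  have hex : ∃ n, σ n ≠ 0 := ⟨T, by rw [hev T le_rfl]; decide⟩
  set t := Nat.find hex with ht
  have htne : σ t ≠ 0 := Nat.find_spec hex
  have ht1 : 1 ≤ t := by
    rcases Nat.eq_zero_or_pos t with h' | h'
    · rw [h', h0] at htne; exact absurd rfl htne
    · exact h'
  obtain ⟨k, hk⟩ : ∃ k, t = k + 1 := ⟨t - 1, by omega⟩
  have hk0 : σ k = 0 := by
    by_contra hne
    have : Nat.find hex ≤ k := Nat.find_le hne
    omega
  have s : σ (k+1) = σ k ∨ adj5 (σ k) (σ (k+1)) := hstep k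
  rw [hk0] at s
  rw [hk] at htne
  refine ⟨t, ht1, ?_⟩
  rw [hk]
  rcases fin5_cases (σ (k+1)) with e | e | e | e | e <;> rw [e] at s htne ⊢ <;>
    revert s htne <;> decide

lemma p1_path : IsPathFun G5 0 3 p1 := by
  refine ⟨rfl, ?_, 3, p1_large⟩
  intro n
  match n with
  | 0 => exact Or.inr (show adj5 0 1 by decide)
  | 1 => exact Or.inr (show adj5 1 2 by decide)
  | 2 => exact Or.inr (show adj5 2 3 by decide)
  | (k+3) => exact Or.inl rfl

lemma p2_path : IsPathFun G5 2 1 p2 := by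
  refine ⟨rfl, ?_, 4, p2_large⟩
  intro n
  match n with
  | 0 => exact Or.inr (show adj5 2 4 by decide)
  | 1 => exact Or.inl rfl
  | 2 => exact Or.inr (show adj5 4 2 by decide)
  | 3 => exact Or.inr (show adj5 2 1 by decide)
  | (k+4) => exact Or.inl rfl

lemma arr_p1 : arrivalTime 3 p1 = 3 :=
  le_antisymm (arr_le p1_large) (arr1_ge p1 p1_path)

lemma arr_p2 : arrivalTime 1 p2 = 4 := by
  have hle : arrivalTime 1 p2 ≤ 4 := arr_le p2_large
  rcases Nat.lt_or_ge (arrivalTime 1 p2) 4 with h | h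
  · have := arr_mem (⟨4, p2_large⟩ : ∃ T, ∀ n ≥ T, p2 n = 1) 3 (by omega)
    exact absurd this (by decide)
  · omega

lemma no_col_12 : ¬ Collide p1 p2 := by
  rintro (⟨t, ht⟩ | ⟨t, ht1, ht2⟩)
  · match t with
    | 0 => exact absurd ht (by decide)
    | 1 => exact absurd ht (by decide)
    | 2 => exact absurd ht (by decide)
    | 3 => exact absurd ht (by decide)
    | (k+4) =>
      rw [p1_large _ (by omega), p2_large _ (by omega)] at ht
      exact absurd ht (by decide)
  · match t with
    | 0 => exact absurd ht1 (by decide)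
    | 1 => exact absurd ht1 (by decide)
    | 2 => exact absurd ht2 (by decide)
    | 3 => exact absurd ht1 (by decide)
    | (k+4) =>
      rw [p1_large _ (by omega), p2_large _ (by omega)] at ht1
      exact absurd ht1 (by decide)

lemma no_col_21 : ¬ Collide p2 p1 := fun h => no_col_12 (collide_symm h)

-- any agent-2 path avoiding p1 has arrival time ≥ 4
lemma arr2_avoid_ge (σ : ℕ → Fin 5) (h : IsPathFun G5 2 1 σ) (hc : ¬ Collide σ p1) :
    4 ≤ arrivalTime 1 σ := by
  obtain ⟨h0, hstep, hev⟩ := h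
  by_contra hlt
  push_neg at hlt
  have hm := arr_mem hev
  have h3 : σ 3 = 1 := hm 3 (by omega)
  have nv1 : σ 1 ≠ 1 := fun ht => hc (Or.inl ⟨1, ht⟩)
  have nv2 : σ 2 ≠ 2 := fun ht => hc (Or.inl ⟨2, ht⟩)
  have ne1 : ¬(σ 1 = 2 ∧ σ 2 = 1) := fun ht => hc (Or.inr ⟨1, ht.1, ht.2⟩)
  have s0 : σ 1 = σ 0 ∨ adj5 (σ 0) (σ 1) := hstep 0
  have s1 : σ 2 = σ 1 ∨ adj5 (σ 1) (σ 2) := hstep 1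
  have s2 : σ 3 = σ 2 ∨ adj5 (σ 2) (σ 3) := hstep 2
  rw [h0] at s0
  rw [h3] at s2
  have ne1' : ¬(σ 1 = 2 ∧ σ 2 = 1) := ne1
  rcases fin5_cases (σ 1) with e1 | e1 | e1 | e1 | e1 <;>
    rcases fin5_cases (σ 2) with e2 | e2 | e2 | e2 | e2 <;>
      rw [e1] at s0 s1 nv1 <;> rw [e2] at s1 s2 nv2 <;>
        first
          | (revert s0 s1 s2 nv1 nv2; decide)
          | (exact ne1' ⟨e1, e2⟩)

def q2 : ℕ → Fin 5 := fun n => match n with | 0 => 2 | _ => 1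

lemma q2_large : ∀ n ≥ 1, q2 n = 1 := by
  intro n hn
  obtain ⟨k, rfl⟩ : ∃ k, n = k + 1 := ⟨n - 1, by omega⟩
  rfl

lemma q2_path : IsPathFun G5 2 1 q2 := by
  refine ⟨rfl, ?_, 1, q2_large⟩
  intro n
  match n with
  | 0 => exact Or.inr (show adj5 2 1 by decide)
  | (k+1) => exact Or.inl rfl

lemma arr_q2 : arrivalTime 1 q2 = 1 :=
  le_antisymm (arr_le q2_large) (arr2_ge q2 q2_path)

abbrev P5 : MAPF where
  V := Fin 5
  G := G5
  conn := G5_conn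
  M := 2
  s := fun i => if i.1 = 0 then 0 else 2
  t := fun i => if i.1 = 0 then 3 else 1
  s_inj := by
    intro a b h
    fin_cases a <;> fin_cases b <;> simp_all
  t_inj := by
    intro a b h
    fin_cases a <;> fin_cases b <;> simp_all

abbrev Pi2 : Fin 2 → ℕ → Fin 5 := fun i => if i.1 = 0 then p1 else p2

/-- There exists a P-solvable MAPF instance with two agents that admits a solution
consistent with the priority ordering `{1 ≺ 2}`, but no solution consistent with
`{2 ≺ 1}` and no solution consistent with the empty priority ordering. -/
theorem stmt1 :
    ∃ P : MAPF, P.M = 2 ∧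
      (∃ π, P.Solution π ∧ P.Consistent π (fun i j => i.1 = 0 ∧ j.1 = 1)) ∧
      (¬ ∃ π, P.Solution π ∧ P.Consistent π (fun i j => i.1 = 1 ∧ j.1 = 0)) ∧
      (¬ ∃ π, P.Solution π ∧ P.Consistent π (fun _ _ => False)) := by
  refine ⟨P5, rfl, ?_, ?_, ?_⟩
  · -- consistent with 1 ≺ 2
    refine ⟨Pi2, ⟨?_, ?_⟩, ?_⟩
    · intro i
      fin_cases i
      · exact p1_path
      · exact p2_path
    · intro i j hne
      fin_cases i <;> fin_cases j
      · exact absurd rfl hne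
      · exact no_col_12
      · exact no_col_21
      · exact absurd rfl hne
    · intro i
      fin_cases i
      · constructor
        · exact ⟨p1, p1_path, fun j hj => absurd hj.2 (by decide), rfl⟩
        · rintro T ⟨σ, hσ, -, rfl⟩
          have h3 : (3 : ℕ) ≤ arrivalTime 3 σ := arr1_ge σ hσ
          exact le_trans (le_of_eq arr_p1) h3
      · constructor
        · refine ⟨p2, p2_path, ?_, rfl⟩
          intro j hj
          have hj0 : j = 0 := Fin.ext hj.1
          rw [hj0]
          exact no_col_21
        · rintro T ⟨σ, hσ, hav, rfl⟩
          have hc : ¬ Collide σ p1 := hav 0 ⟨rfl, rfl⟩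
          have h4 : (4 : ℕ) ≤ arrivalTime 1 σ := arr2_avoid_ge σ hσ hc
          exact le_trans (le_of_eq arr_p2) h4
  · -- no solution consistent with 2 ≺ 1
    rintro ⟨π, hsol, hcons⟩
    have h1 := hcons 1
    have hle : P5.arr 1 (π 1) ≤ 1 := by
      have hmem : (1 : ℕ) ∈ {T | ∃ σ, P5.IsPath 1 σ ∧
          (∀ j, ((j : Fin 2).1 = 1 ∧ (1 : Fin 2).1 = 0) → ¬ Collide σ (π j)) ∧
          P5.arr 1 σ = T} :=
        ⟨q2, q2_path, fun j hj => absurd hj.2 (by decide), arr_q2⟩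
      exact h1.2 hmem
    have hge : (1 : ℕ) ≤ P5.arr 1 (π 1) := arr2_ge (π 1) (hsol.1 1)
    have heq : P5.arr 1 (π 1) = 1 := le_antisymm hle hge
    have hall : ∀ n ≥ 1, π 1 n = 1 := by
      have hm := arr_mem (hsol.1 1).2.2
      intro n hn
      have : n ≥ arrivalTime 1 (π 1) := by
        have : arrivalTime 1 (π 1) = 1 := heq
        omega
      exact hm n this
    have h0 := hcons 0
    obtain ⟨σ, hσ, hav, -⟩ := h0.1
    have hc : ¬ Collide σ (π 1) := hav 1 ⟨rfl, rfl⟩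
    obtain ⟨t, ht1, ht⟩ := hits1 σ hσ
    exact hc (Or.inl ⟨t, by rw [ht, hall t ht1]⟩)
  · -- no solution consistent with the empty ordering
    rintro ⟨π, hsol, hcons⟩
    have h0 := hcons 0
    have h1 := hcons 1
    have hle0 : P5.arr 0 (π 0) ≤ 3 :=
      h0.2 ⟨p1, p1_path, fun j hj => hj.elim, arr_p1⟩
    have hge0 : (3 : ℕ) ≤ P5.arr 0 (π 0) := arr1_ge (π 0) (hsol.1 0)
    have heq0 : arrivalTime 3 (π 0) = 3 := le_antisymm hle0 hge0
    have hpi0 : π 0 1 = 1 := (arr1_eq3 (π 0) (hsol.1 0) heq0).1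
    have hle1 : P5.arr 1 (π 1) ≤ 1 :=
      h1.2 ⟨q2, q2_path, fun j hj => hj.elim, arr_q2⟩
    have hge1 : (1 : ℕ) ≤ P5.arr 1 (π 1) := arr2_ge (π 1) (hsol.1 1)
    have heq1 : arrivalTime 1 (π 1) = 1 := le_antisymm hle1 hge1
    have hpi1 : π 1 1 = 1 := by
      have hm := arr_mem (hsol.1 1).2.2
      have heq1' : arrivalTime (P5.t 1) (π 1) = 1 := heq1
      exact hm 1 (by omega)
    exact hsol.2 0 1 (by decide) (Or.inl ⟨1, by rw [hpi0, hpi1]⟩)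
end

section
/- Every well-formed MAPF instance admits a solution, i.e., an assignment of a path to each agent such that no two paths have a vertex or edge collision. -/
/-- Every well-formed MAPF instance admits a solution. -/
theorem stmt4 (P : MAPF) (hwf : P.WellFormed) : ∃ π, P.Solution π := by
  classical
  choose w hw using hwf
  set L : Fin P.M → ℕ := fun i => (w i).length with hLdef
  set ℓ : ℕ → ℕ := fun n => if h : n < P.M then L ⟨n, h⟩ else 0 with hldef
  set τ : Fin P.M → ℕ := fun i => ∑ k ∈ Finset.range i.val, ℓ k with hτdef
  set π : Fin P.M → ℕ → P.V := fun i t => (w i).getVert (min (t - τ i) (L i)) with hπdef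
  -- separation of movement intervals
  have hsep : ∀ i j : Fin P.M, i < j → τ i + L i ≤ τ j := by
    intro i j hij
    have h1 : τ i + L i = ∑ k ∈ Finset.range (i.val + 1), ℓ k := by
      rw [Finset.sum_range_succ]
      simp only [hτdef, hldef, i.isLt, dif_pos]
    rw [h1]
    exact Finset.sum_le_sum_of_subset (Finset.range_subset_range.mpr hij)
  -- membership of positions in the walk supports
  have hmem : ∀ (i : Fin P.M) (t : ℕ), π i t ∈ (w i).support := by
    intro i t
    rw [SimpleGraph.Walk.mem_support_iff_exists_getVert]
    exact ⟨min (t - τ i) (L i), rfl, min_le_right _ _⟩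
  -- no vertex collision, ordered version
  have key : ∀ i j : Fin P.M, i < j → ∀ t, π i t ≠ π j t := by
    intro i j hij t
    have hs := hsep i j hij
    rcases le_or_gt t (τ j) with h | h
    · have hb : min (t - τ j) (L j) = 0 := by omega
      have hj : π j t = P.s j := by
        simp only [hπdef, hb, SimpleGraph.Walk.getVert_zero]
      rw [hj]
      intro heq
      exact (hw i j hij.ne').1 (heq ▸ hmem i t)
    · have ha : min (t - τ i) (L i) = L i := by omega
      have hi : π i t = P.t i := by
        simp only [hπdef]; rw [ha]; simp only [hLdef, SimpleGraph.Walk.getVert_length]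
      rw [hi]
      intro heq
      exact (hw j i hij.ne).2 (heq ▸ hmem j t)
  have hvert : ∀ i j : Fin P.M, i ≠ j → ∀ t, π i t ≠ π j t := by
    intro i j hij t
    rcases hij.lt_or_gt with h | h
    · exact key i j h t
    · exact (key j i h t).symm
  -- movement implies within movement interval
  have hmove : ∀ (i : Fin P.M) (t : ℕ), π i (t + 1) ≠ π i t → τ i ≤ t ∧ t < τ i + L i := by
    intro i t h
    by_contra hc
    apply h
    have : min (t + 1 - τ i) (L i) = min (t - τ i) (L i) := by omega
    simp only [hπdef, this]
  refine ⟨π, ?_, ?_⟩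
  · intro i
    refine ⟨?_, ?_, τ i + L i, ?_⟩
    · have : min (0 - τ i) (L i) = 0 := by omega
      simp only [hπdef, this, SimpleGraph.Walk.getVert_zero]
    · intro n
      by_cases hc : min (n + 1 - τ i) (L i) = min (n - τ i) (L i)
      · left; simp only [hπdef, hc]
      · right
        have h1 : τ i ≤ n ∧ n < τ i + L i := by omega
        have h2 : min (n - τ i) (L i) = n - τ i := by omega
        have h3 : min (n + 1 - τ i) (L i) = n - τ i + 1 := by omega
        simp only [hπdef, h2, h3]
        have hlen : L i = (w i).length := rfl
        exact (w i).adj_getVert_succ (by omega)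
    · intro n hn
      have : min (n - τ i) (L i) = L i := by omega
      simp only [hπdef]; rw [this]; simp only [hLdef, SimpleGraph.Walk.getVert_length]
  · intro i j hij hcol
    rcases hcol with ⟨t, ht⟩ | ⟨t, h1, h2⟩
    · exact hvert i j hij t ht
    · by_cases hmi : π i (t + 1) = π i t
      · exact hvert i j hij t (by rw [← hmi, h2])
      · by_cases hmj : π j (t + 1) = π j t
        · exact hvert i j hij t (by rw [h1, hmj])
        · have hi := hmove i t hmi
          have hj := hmove j t hmj
          rcases hij.lt_or_gt with h | h
          · have := hsep i j h; omega
          · have := hsep j i h; omega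
end
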